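/- For every nonnegative integer k, 2^(2k) = Σ_{p+q=k} C(2p,p) · C(2q,q), where the sum is over nonnegative integers p, q with p+q = k. -/

import Mathlib

open Finset Nat

private def S (m : ℕ) : ℕ := ∑ p ∈ range (m+1), centralBinom p * centralBinom (m-p)
private def U (m : ℕ) : ℕ := ∑ p ∈ range (m+1), p * (centralBinom p * centralBinom (m-p))

private lemma twoU (m : ℕ) : 2 * U m = m * S m := by
  have h := Finset.sum_range_reflect (fun p => p * (centralBinom p * centralBinom (m-p))) (m+1)
  simp only [add_tsub_cancel_right] at h
  have : 2 * U m = U m + ∑ j ∈ range (m+1), (m - j) * (centralBinom (m-j) * centralBinom (m-(m-j))) := by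
    rw [two_mul, U, ← h]
  rw [this, U, ← Finset.sum_add_distrib, S, Finset.mul_sum]
  apply Finset.sum_congr rfl
  intro j hj
  have hjm : j ≤ m := by simpa [Nat.lt_succ_iff] using hj
  rw [Nat.sub_sub_self hjm, mul_comm (centralBinom (m-j)) (centralBinom j), ← add_mul,
    Nat.add_sub_cancel' hjm]

private lemma Urec (k : ℕ) : U (k+1) = 4 * U k + 2 * S k := by
  rw [U, Finset.sum_range_succ']
  simp only [Nat.zero_mul, add_zero]
  have : ∀ i ∈ range (k+1), (i+1) * (centralBinom (i+1) * centralBinom (k+1-(i+1)))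
      = 4 * (i * (centralBinom i * centralBinom (k-i))) + 2 * (centralBinom i * centralBinom (k-i)) := by
    intro i _
    have h := succ_mul_centralBinom_succ i
    have : (i+1) * (centralBinom (i+1) * centralBinom (k+1-(i+1)))
        = ((i+1) * centralBinom (i+1)) * centralBinom (k-i) := by
      rw [Nat.succ_sub_succ]; ring
    rw [this, h]; ring
  rw [Finset.sum_congr rfl this, Finset.sum_add_distrib, ← Finset.mul_sum, ← Finset.mul_sum]
  rfl

private lemma Spow (k : ℕ) : S k = 4 ^ k := by
  induction k with
  | zero => simp [S, centralBinom]
  | succ k ih =>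
    have h1 : (k+1) * S (k+1) = 2 * U (k+1) := (twoU (k+1)).symm
    rw [Urec k] at h1
    have h2 : (k+1) * S (k+1) = 4 * (2 * U k) + 4 * S k := by rw [h1]; ring
    rw [twoU k, ih] at h2
    have h3 : (k+1) * S (k+1) = (k+1) * 4 ^ (k+1) := by rw [h2]; ring
    exact Nat.eq_of_mul_eq_mul_left (Nat.succ_pos k) h3

theorem stmt0 (k : ℕ) :
    2 ^ (2 * k) = ∑ pq ∈ Finset.HasAntidiagonal.antidiagonal k,
      Nat.choose (2 * pq.1) pq.1 * Nat.choose (2 * pq.2) pq.2 := by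
  rw [Finset.Nat.sum_antidiagonal_eq_sum_range_succ_mk]
  have : ∑ i ∈ range (k+1), Nat.choose (2*i) i * Nat.choose (2*(k-i)) (k-i) = S k := rfl
  rw [this, Spow, pow_mul]; norm_num
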